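/- Let G be an abelian group, A, B ⊆ G with |A| = |B| = N, and let ε, δ > 0. The following are equivalent: (1) For every Γ ⊆ A × B with |Γ| ≥ (1-δ)N², there exist A' ⊆ A, B' ⊆ B, S ⊆ A+B with |A'| ≥ (1-ε)N, |B'| ≥ (1-ε)N, |S| ≤ εN, and A' + B' ⊆ (A +_Γ B) ∪ S. (2) For every C ⊆ G, if the number of triples (a,b,c) ∈ A × B × C with a + b = c is at most δN², then one can remove at most εN elements from each of A, B, C to obtain A', B', C' such that no a ∈ A', b ∈ B', c ∈ C' satisfy a + b = c. -/

import Mathlib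

open Finset Pointwise

theorem stmt_2 {G : Type*} [AddCommGroup G] [DecidableEq G]
    (A B : Finset G) (N : ℕ) (hA : A.card = N) (hB : B.card = N)
    (ε δ : ℝ) (hε : 0 < ε) (hδ : 0 < δ) :
    (∀ Γ : Finset (G × G), Γ ⊆ A ×ˢ B → (1 - δ) * (N : ℝ) ^ 2 ≤ Γ.card →
      ∃ A' ⊆ A, ∃ B' ⊆ B, ∃ S ⊆ A + B,
        (1 - ε) * N ≤ (A'.card : ℝ) ∧ (1 - ε) * N ≤ (B'.card : ℝ) ∧
        (S.card : ℝ) ≤ ε * N ∧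
        A' + B' ⊆ (Γ.image fun p => p.1 + p.2) ∪ S)
    ↔
    (∀ C : Finset G,
      (((((A ×ˢ B) ×ˢ C).filter fun p => p.1.1 + p.1.2 = p.2).card : ℝ) ≤ δ * (N : ℝ) ^ 2) →
      ∃ A' ⊆ A, ∃ B' ⊆ B, ∃ C' ⊆ C,
        ((A \ A').card : ℝ) ≤ ε * N ∧ ((B \ B').card : ℝ) ≤ ε * N ∧
        ((C \ C').card : ℝ) ≤ ε * N ∧
        ∀ a ∈ A', ∀ b ∈ B', ∀ c ∈ C', a + b ≠ c) := by
  have hABcard : (A ×ˢ B).card = N ^ 2 := by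
    rw [card_product, hA, hB, sq]
  constructor
  · -- (1) → (2)
    intro h1 C hC
    set Γ : Finset (G × G) := (A ×ˢ B).filter (fun p => p.1 + p.2 ∉ C) with hΓdef
    have hΓsub : Γ ⊆ A ×ˢ B := filter_subset _ _
    -- the pairs with sum in C inject into the triples
    have hinj : ((A ×ˢ B).filter (fun p => p.1 + p.2 ∈ C)).card ≤
        (((A ×ˢ B) ×ˢ C).filter fun p => p.1.1 + p.1.2 = p.2).card := by
      apply Finset.card_le_card_of_injOn (fun p => (p, p.1 + p.2))
      · intro p hp
        have hp' := mem_filter.mp hp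
        exact mem_filter.mpr ⟨mem_product.mpr ⟨hp'.1, hp'.2⟩, rfl⟩
      · intro p _ q _ h
        exact (Prod.ext_iff.mp h).1
    have hsplit : ((A ×ˢ B).filter (fun p => p.1 + p.2 ∈ C)).card + Γ.card = N ^ 2 := by
      rw [hΓdef, Finset.card_filter_add_card_filter_not, hABcard]
    have hΓcard : (1 - δ) * (N : ℝ) ^ 2 ≤ Γ.card := by
      have h1' : (((A ×ˢ B).filter (fun p => p.1 + p.2 ∈ C)).card : ℝ) ≤ δ * (N : ℝ) ^ 2 := by
        exact le_trans (by exact_mod_cast hinj) hC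
      have := hsplit
      have h2 : (((A ×ˢ B).filter (fun p => p.1 + p.2 ∈ C)).card : ℝ) + Γ.card = (N : ℝ) ^ 2 := by
        exact_mod_cast congrArg (Nat.cast : ℕ → ℝ) this
      nlinarith
    obtain ⟨A', hA'sub, B', hB'sub, S, hSsub, hA'c, hB'c, hSc, hsum⟩ := h1 Γ hΓsub hΓcard
    refine ⟨A', hA'sub, B', hB'sub, C \ S, sdiff_subset, ?_, ?_, ?_, ?_⟩
    · have h := card_sdiff_of_subset hA'sub
      have hle := card_le_card hA'sub
      have : ((A \ A').card : ℝ) = N - A'.card := by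
        rw [h, hA]; push_cast [Nat.cast_sub (hA ▸ hle)]; ring
      rw [this]; nlinarith
    · have h := card_sdiff_of_subset hB'sub
      have hle := card_le_card hB'sub
      have : ((B \ B').card : ℝ) = N - B'.card := by
        rw [h, hB]; push_cast [Nat.cast_sub (hB ▸ hle)]; ring
      rw [this]; nlinarith
    · calc ((C \ (C \ S)).card : ℝ) ≤ S.card := by
            exact_mod_cast card_le_card (by
              intro x hx
              simp only [mem_sdiff, not_and, not_not] at hx
              exact hx.2 hx.1)
        _ ≤ ε * N := hSc
    · intro a ha b hb c hc hab
      have hcS : c ∉ S := (mem_sdiff.mp hc).2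
      have hcC : c ∈ C := (mem_sdiff.mp hc).1
      have : a + b ∈ (Γ.image fun p => p.1 + p.2) ∪ S := by
        apply hsum
        exact add_mem_add ha hb
      rcases mem_union.mp this with h | h
      · obtain ⟨p, hp, hpe⟩ := mem_image.mp h
        have : p.1 + p.2 ∉ C := (mem_filter.mp hp).2
        rw [hpe, hab] at this
        exact this hcC
      · rw [hab] at h; exact hcS h
  · -- (2) → (1)
    intro h2 Γ hΓsub hΓcard
    set C : Finset G := (A + B) \ (Γ.image fun p => p.1 + p.2) with hCdef
    -- triples inject into pairs outside Γ
    have hinj : (((A ×ˢ B) ×ˢ C).filter fun p => p.1.1 + p.1.2 = p.2).card ≤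
        ((A ×ˢ B) \ Γ).card := by
      apply Finset.card_le_card_of_injOn (fun p => p.1)
      · intro p hp
        simp only [mem_coe, mem_filter, mem_product] at hp
        obtain ⟨⟨hpAB, hpC⟩, heq⟩ := hp
        rw [mem_coe, mem_sdiff, mem_product]
        refine ⟨hpAB, fun hmem => ?_⟩
        have : p.1.1 + p.1.2 ∈ Γ.image fun q => q.1 + q.2 :=
          mem_image.mpr ⟨p.1, hmem, rfl⟩
        rw [heq] at this
        exact (mem_sdiff.mp hpC).2 this
      · intro p hp q hq h
        simp only [mem_coe, mem_filter] at hp hq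
        have h1 : p.1 = q.1 := h
        have h2 : p.2 = q.2 := by rw [← hp.2, ← hq.2, h1]
        exact Prod.ext h1 h2
    have hcompl : ((A ×ˢ B) \ Γ).card = N ^ 2 - Γ.card := by
      rw [card_sdiff_of_subset hΓsub, hABcard]
    have hΓle : Γ.card ≤ N ^ 2 := hABcard ▸ card_le_card hΓsub
    have hCcount : ((((A ×ˢ B) ×ˢ C).filter fun p => p.1.1 + p.1.2 = p.2).card : ℝ)
        ≤ δ * (N : ℝ) ^ 2 := by
      have h1 : ((((A ×ˢ B) ×ˢ C).filter fun p => p.1.1 + p.1.2 = p.2).card : ℝ)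
          ≤ (N : ℝ) ^ 2 - Γ.card := by
        have := hinj
        rw [hcompl] at this
        have := (Nat.cast_le (α := ℝ)).mpr this
        rw [Nat.cast_sub hΓle] at this
        push_cast at this
        exact this
      push_cast at h1 ⊢
      nlinarith
    obtain ⟨A', hA'sub, B', hB'sub, C', hC'sub, hAc, hBc, hCc, hfree⟩ := h2 C hCcount
    refine ⟨A', hA'sub, B', hB'sub, C \ C', (sdiff_subset).trans sdiff_subset, ?_, ?_, ?_, ?_⟩
    · have h := card_sdiff_of_subset hA'sub
      have hle := card_le_card hA'sub
      have heq : ((A \ A').card : ℝ) = N - A'.card := by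
        rw [h, hA]; push_cast [Nat.cast_sub (hA ▸ hle)]; ring
      rw [heq] at hAc; linarith
    · have h := card_sdiff_of_subset hB'sub
      have hle := card_le_card hB'sub
      have heq : ((B \ B').card : ℝ) = N - B'.card := by
        rw [h, hB]; push_cast [Nat.cast_sub (hB ▸ hle)]; ring
      rw [heq] at hBc; linarith
    · exact hCc
    · intro x hx
      obtain ⟨a, ha, b, hb, rfl⟩ := mem_add.mp hx
      by_cases hmem : a + b ∈ Γ.image fun p => p.1 + p.2
      · exact mem_union_left _ hmem
      · have habC : a + b ∈ C := by
          rw [hCdef, mem_sdiff]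
          exact ⟨add_mem_add (hA'sub ha) (hB'sub hb), hmem⟩
        have : a + b ∉ C' := fun hc => hfree a ha b hb _ hc rfl
        exact mem_union_right _ (mem_sdiff.mpr ⟨habC, this⟩)
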